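/- Suppose e : (0,∞) → ℂ is continuous, e(t) = O(t^{-∞}) as t → ∞ (i.e., decays faster than any polynomial), and e admits an asymptotic expansion e(t) ∼ ∑_{j=0}^∞ a_j t^{β_j} as t → 0⁺, where β_j is a strictly increasing real sequence with β_j → +∞. Then the Mellin transform f(s) = ∫_0^∞ t^{s-1} e(t) dt, initially holomorphic for Re(s) > −β_0, extends meromorphically to ℂ with at most simple poles at s = −β_j with residue a_j. -/

import Mathlib

open MeasureTheory Set Filter
open Complex Topology

noncomputable def mellinAuxG (e : ℝ → ℂ) (a : ℕ → ℂ) (β : ℕ → ℝ) (N : ℕ) : ℝ → ℂ :=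
  fun t => e t - Set.indicator (Set.Ioc 0 1)
    (fun t : ℝ => ∑ j ∈ Finset.range (N + 1), a j * (t : ℂ) ^ (β j : ℂ)) t

noncomputable def mellinAuxP (e : ℝ → ℂ) (a : ℕ → ℂ) (β : ℕ → ℝ) (N : ℕ) (s : ℂ) : ℂ :=
  mellin (mellinAuxG e a β N) s + ∑ j ∈ Finset.range (N + 1), a j / (s + β j)

lemma hasMellin_ind_single (c : ℂ) (b : ℝ) {s : ℂ} (hs : -b < s.re) :
    HasMellin (Set.indicator (Set.Ioc 0 1) (fun t : ℝ => c * (t : ℂ) ^ (b : ℂ))) s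
      (c / (s + b)) := by
  have h := hasMellin_cpow_Ioc (b : ℂ) (s := s) (by simpa using by linarith)
  have hfun : Set.indicator (Set.Ioc 0 1) (fun t : ℝ => c * (t : ℂ) ^ (b : ℂ))
      = fun t => c • Set.indicator (Set.Ioc 0 1) (fun t : ℝ => (t : ℂ) ^ (b : ℂ)) t := by
    funext t
    by_cases ht : t ∈ Set.Ioc (0:ℝ) 1 <;> simp [Set.indicator, ht]
  refine ⟨?_, ?_⟩
  · rw [hfun]; exact h.1.const_smul c
  · rw [hfun, mellin_const_smul, h.2]
    simp [div_eq_mul_inv, mul_comm]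

lemma hasMellin_ind_sum (a : ℕ → ℂ) (β : ℕ → ℝ) (s : ℂ) (S : Finset ℕ)
    (h : ∀ j ∈ S, -β j < s.re) :
    HasMellin (Set.indicator (Set.Ioc 0 1)
      (fun t : ℝ => ∑ j ∈ S, a j * (t : ℂ) ^ (β j : ℂ))) s (∑ j ∈ S, a j / (s + β j)) := by
  classical
  induction S using Finset.cons_induction with
  | empty =>
      refine ⟨?_, ?_⟩
      · have : (Set.indicator (Set.Ioc 0 1)
            (fun _ : ℝ => ∑ j ∈ (∅ : Finset ℕ), a j * (0:ℂ))) = fun _ => (0:ℂ) := by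
          funext t; by_cases ht : t ∈ Set.Ioc (0:ℝ) 1 <;> simp [Set.indicator, ht]
        simp only [MellinConvergent, Finset.sum_empty]
        simp only [Set.indicator_apply]
        refine Integrable.congr (integrable_zero _ _ _) ?_
        filter_upwards with t
        by_cases ht : t ∈ Set.Ioc (0:ℝ) 1 <;> simp [ht]
      · simp [mellin, Finset.sum_empty]
  | cons j S hj ih =>
      have h1 := hasMellin_ind_single (a j) (β j) (h j (Finset.mem_cons_self _ _))
      have h2 := ih (fun i hi => h i (Finset.mem_cons_of_mem hi))
      have h3 := hasMellin_add h1.1 h2.1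
      rw [h1.2, h2.2] at h3
      have hfun : (fun t : ℝ =>
          Set.indicator (Set.Ioc 0 1) (fun t : ℝ => a j * (t : ℂ) ^ (β j : ℂ)) t +
          Set.indicator (Set.Ioc 0 1)
            (fun t : ℝ => ∑ i ∈ S, a i * (t : ℂ) ^ (β i : ℂ)) t)
          = Set.indicator (Set.Ioc 0 1)
            (fun t : ℝ => ∑ i ∈ Finset.cons j S hj, a i * (t : ℂ) ^ (β i : ℂ)) := by
        funext t
        by_cases ht : t ∈ Set.Ioc (0:ℝ) 1 <;> simp [Set.indicator, ht, Finset.sum_insert hj]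
      rw [hfun] at h3
      rw [Finset.sum_cons]
      exact h3

lemma mellinAuxG_locInt (e : ℝ → ℂ) (he : ContinuousOn e (Ioi 0)) (a : ℕ → ℂ) (β : ℕ → ℝ)
    (N : ℕ) : LocallyIntegrableOn (mellinAuxG e a β N) (Ioi 0) := by
  have h1 : LocallyIntegrableOn e (Ioi 0) := he.locallyIntegrableOn measurableSet_Ioi
  have hc : ContinuousOn (fun t : ℝ => ∑ j ∈ Finset.range (N + 1), a j * (t : ℂ) ^ (β j : ℂ))
      (Ioi 0) := by
    apply continuousOn_finset_sum
    intro j _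
    apply ContinuousOn.mul continuousOn_const
    intro t ht
    refine ContinuousWithinAt.cpow ?_ continuousWithinAt_const ?_
    · exact (Complex.continuous_ofReal.continuousWithinAt)
    · simp only [Complex.ofReal_mem_slitPlane]
      exact ht
  have h2 : LocallyIntegrableOn (Set.indicator (Set.Ioc 0 1)
      (fun t : ℝ => ∑ j ∈ Finset.range (N + 1), a j * (t : ℂ) ^ (β j : ℂ))) (Ioi 0) := by
    intro x hx
    rcases hc.locallyIntegrableOn (μ := volume) measurableSet_Ioi x hx with ⟨U, hU, h'U⟩
    exact ⟨U, hU, h'U.indicator measurableSet_Ioc⟩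
  exact h1.sub h2

lemma mellinAuxG_top (e : ℝ → ℂ)
    (hinf : ∀ N : ℕ, ∃ C : ℝ, ∀ t : ℝ, 1 ≤ t → ‖e t‖ ≤ C * t ^ (-(N : ℝ)))
    (a : ℕ → ℂ) (β : ℕ → ℝ) (N M : ℕ) :
    (mellinAuxG e a β N) =O[atTop] (fun t : ℝ => t ^ (-(M : ℝ))) := by
  obtain ⟨C, hC⟩ := hinf M
  rw [Asymptotics.isBigO_iff]
  refine ⟨C, ?_⟩
  filter_upwards [eventually_ge_atTop (2 : ℝ)] with t ht
  have ht1 : (1:ℝ) < t := by linarith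
  have hne : t ∉ Set.Ioc (0:ℝ) 1 := by simp [Set.mem_Ioc]; intro _; linarith
  have : mellinAuxG e a β N t = e t := by
    simp [mellinAuxG, Set.indicator_of_notMem hne]
  rw [this, Real.norm_eq_abs, abs_of_pos (Real.rpow_pos_of_pos (by linarith) _)]
  exact hC t (by linarith)

lemma mellinAuxG_bot (e : ℝ → ℂ) (a : ℕ → ℂ) (β : ℕ → ℝ) (N : ℕ)
    (hexp : ∃ C : ℝ, ∀ t ∈ Ioo (0 : ℝ) 1,
      ‖e t - ∑ j ∈ Finset.range (N + 1), a j * (t : ℂ) ^ (β j : ℂ)‖ ≤ C * t ^ (β (N + 1))) :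
    (mellinAuxG e a β N) =O[𝓝[>] (0:ℝ)] (fun t : ℝ => t ^ (β (N + 1))) := by
  obtain ⟨C, hC⟩ := hexp
  rw [Asymptotics.isBigO_iff]
  refine ⟨C, ?_⟩
  filter_upwards [Ioo_mem_nhdsGT (zero_lt_one (α := ℝ))] with t ht
  have hmem : t ∈ Set.Ioc (0:ℝ) 1 := ⟨ht.1, le_of_lt ht.2⟩
  have : mellinAuxG e a β N t
      = e t - ∑ j ∈ Finset.range (N + 1), a j * (t : ℂ) ^ (β j : ℂ) := by
    simp [mellinAuxG, Set.indicator_of_mem hmem]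
  rw [this, Real.norm_eq_abs, abs_of_pos (Real.rpow_pos_of_pos ht.1 _)]
  exact hC t ht

lemma mellinAuxG_conv (e : ℝ → ℂ) (he : ContinuousOn e (Ioi 0))
    (hinf : ∀ N : ℕ, ∃ C : ℝ, ∀ t : ℝ, 1 ≤ t → ‖e t‖ ≤ C * t ^ (-(N : ℝ)))
    (a : ℕ → ℂ) (β : ℕ → ℝ) (N : ℕ)
    (hexp : ∃ C : ℝ, ∀ t ∈ Ioo (0 : ℝ) 1,
      ‖e t - ∑ j ∈ Finset.range (N + 1), a j * (t : ℂ) ^ (β j : ℂ)‖ ≤ C * t ^ (β (N + 1)))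
    {s : ℂ} (hs : -β (N + 1) < s.re) :
    MellinConvergent (mellinAuxG e a β N) s := by
  obtain ⟨M, hM⟩ := exists_nat_gt s.re
  exact mellinConvergent_of_isBigO_rpow (a := (M:ℝ)) (b := -β (N+1))
    (mellinAuxG_locInt e he a β N) (mellinAuxG_top e hinf a β N M) hM
    (by simpa using mellinAuxG_bot e a β N hexp) hs

lemma mellinAuxG_diff (e : ℝ → ℂ) (he : ContinuousOn e (Ioi 0))
    (hinf : ∀ N : ℕ, ∃ C : ℝ, ∀ t : ℝ, 1 ≤ t → ‖e t‖ ≤ C * t ^ (-(N : ℝ)))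
    (a : ℕ → ℂ) (β : ℕ → ℝ) (N : ℕ)
    (hexp : ∃ C : ℝ, ∀ t ∈ Ioo (0 : ℝ) 1,
      ‖e t - ∑ j ∈ Finset.range (N + 1), a j * (t : ℂ) ^ (β j : ℂ)‖ ≤ C * t ^ (β (N + 1)))
    {s : ℂ} (hs : -β (N + 1) < s.re) :
    DifferentiableAt ℂ (mellin (mellinAuxG e a β N)) s := by
  obtain ⟨M, hM⟩ := exists_nat_gt s.re
  exact mellin_differentiableAt_of_isBigO_rpow (a := (M:ℝ)) (b := -β (N+1))
    (mellinAuxG_locInt e he a β N) (mellinAuxG_top e hinf a β N M) hM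
    (by simpa using mellinAuxG_bot e a β N hexp) hs

lemma mellinAuxP_agree (e : ℝ → ℂ) (he : ContinuousOn e (Ioi 0))
    (hinf : ∀ N : ℕ, ∃ C : ℝ, ∀ t : ℝ, 1 ≤ t → ‖e t‖ ≤ C * t ^ (-(N : ℝ)))
    (a : ℕ → ℂ) (β : ℕ → ℝ) (hβ : StrictMono β)
    (hexp : ∀ N : ℕ, ∃ C : ℝ, ∀ t ∈ Ioo (0 : ℝ) 1,
      ‖e t - ∑ j ∈ Finset.range (N + 1), a j * (t : ℂ) ^ (β j : ℂ)‖ ≤ C * t ^ (β (N + 1)))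
    {N M : ℕ} (hNM : N ≤ M) {s : ℂ} (hs : -β (N + 1) < s.re) :
    mellinAuxP e a β N s = mellinAuxP e a β M s := by
  classical
  set D : Finset ℕ := Finset.range (M + 1) \ Finset.range (N + 1) with hD
  have hsub : Finset.range (N + 1) ⊆ Finset.range (M + 1) :=
    Finset.range_subset_range.2 (by omega)
  have hDcond : ∀ j ∈ D, -β j < s.re := by
    intro j hj
    rw [hD, Finset.mem_sdiff, Finset.mem_range, Finset.mem_range] at hj
    have : N + 1 ≤ j := by omega
    have : β (N + 1) ≤ β j := hβ.monotone this
    linarith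
  have hDM := hasMellin_ind_sum a β s D hDcond
  have hsM : -β (M + 1) < s.re := by
    have : β (N + 1) ≤ β (M + 1) := hβ.monotone (by omega)
    linarith
  have hgM := mellinAuxG_conv e he hinf a β M (hexp M) hsM
  have h3 := hasMellin_add hgM hDM.1
  rw [hDM.2] at h3
  have hfun : (fun t : ℝ => mellinAuxG e a β M t + Set.indicator (Set.Ioc 0 1)
      (fun t : ℝ => ∑ j ∈ D, a j * (t : ℂ) ^ (β j : ℂ)) t) = mellinAuxG e a β N := by
    funext t
    by_cases ht : t ∈ Set.Ioc (0:ℝ) 1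
    · simp only [mellinAuxG, Set.indicator_of_mem ht]
      rw [← Finset.sum_sdiff hsub, ← hD]
      ring
    · simp [mellinAuxG, Set.indicator_of_notMem ht]
  rw [hfun] at h3
  have key : mellin (mellinAuxG e a β N) s
      = mellin (mellinAuxG e a β M) s + ∑ j ∈ D, a j / (s + β j) := h3.2
  rw [mellinAuxP, mellinAuxP, key]
  rw [← Finset.sum_sdiff (f := fun j => a j / (s + (β j : ℂ))) hsub, ← hD]
  ring

lemma mellinAuxP_eq_mellin (e : ℝ → ℂ) (he : ContinuousOn e (Ioi 0))
    (hinf : ∀ N : ℕ, ∃ C : ℝ, ∀ t : ℝ, 1 ≤ t → ‖e t‖ ≤ C * t ^ (-(N : ℝ)))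
    (a : ℕ → ℂ) (β : ℕ → ℝ) (hβ : StrictMono β)
    (hexp : ∀ N : ℕ, ∃ C : ℝ, ∀ t ∈ Ioo (0 : ℝ) 1,
      ‖e t - ∑ j ∈ Finset.range (N + 1), a j * (t : ℂ) ^ (β j : ℂ)‖ ≤ C * t ^ (β (N + 1)))
    {s : ℂ} (hs : -β 0 < s.re) :
    mellinAuxP e a β 0 s = mellin e s := by
  have hs1 : -β 1 < s.re := by
    have := hβ (Nat.lt_one_iff.mpr rfl |> fun _ => Nat.zero_lt_one)
    have : β 0 < β 1 := hβ Nat.zero_lt_one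
    linarith
  have hcond : ∀ j ∈ Finset.range 1, -β j < s.re := by
    intro j hj
    rw [Finset.mem_range, Nat.lt_one_iff] at hj
    rw [hj]; exact hs
  have hind := hasMellin_ind_sum a β s (Finset.range 1) hcond
  have hg := mellinAuxG_conv e he hinf a β 0 (hexp 0) hs1
  have h3 := hasMellin_add hg hind.1
  rw [hind.2] at h3
  have hfun : (fun t : ℝ => mellinAuxG e a β 0 t + Set.indicator (Set.Ioc 0 1)
      (fun t : ℝ => ∑ j ∈ Finset.range 1, a j * (t : ℂ) ^ (β j : ℂ)) t) = e := by
    funext t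
    simp [mellinAuxG]
  rw [hfun] at h3
  rw [mellinAuxP, h3.2]

/-- Meromorphic continuation of the Mellin transform.  If `e : (0,∞) → ℂ` is
continuous, decays faster than any polynomial at `∞`, and has an asymptotic
expansion `e(t) ∼ ∑ a_j t^{β_j}` as `t → 0⁺` (with `β_j` strictly increasing
to `+∞`), then `f(s) = ∫_0^∞ t^{s-1} e(t) dt`, holomorphic for `Re s > -β₀`,
extends to `F : ℂ → ℂ` holomorphic away from the points `-β_j`, with at most
simple poles at `s = -β_j` of residue `a_j`. -/
theorem mellin_meromorphic_continuation
    (e : ℝ → ℂ) (he : ContinuousOn e (Ioi 0))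
    (hinf : ∀ N : ℕ, ∃ C : ℝ, ∀ t : ℝ, 1 ≤ t → ‖e t‖ ≤ C * t ^ (-(N : ℝ)))
    (a : ℕ → ℂ) (β : ℕ → ℝ) (hβ : StrictMono β) (hβtop : Tendsto β atTop atTop)
    (hexp : ∀ N : ℕ, ∃ C : ℝ, ∀ t ∈ Ioo (0 : ℝ) 1,
      ‖e t - ∑ j ∈ Finset.range (N + 1), a j * (t : ℂ) ^ (β j : ℂ)‖ ≤ C * t ^ (β (N + 1))) :
    ∃ F : ℂ → ℂ,
      (∀ s : ℂ, -β 0 < s.re →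
        F s = ∫ t in Ioi (0 : ℝ), (t : ℂ) ^ (s - 1) * e t) ∧
      (∀ s : ℂ, (∀ j : ℕ, s ≠ -(β j : ℂ)) → DifferentiableAt ℂ F s) ∧
      (∀ j : ℕ, Tendsto (fun s : ℂ => (s + (β j : ℂ)) * F s)
        (nhdsWithin (-(β j : ℂ)) {(-(β j : ℂ))}ᶜ) (nhds (a j))) := by
  classical
  have hex : ∀ s : ℂ, ∃ N : ℕ, -β (N + 1) < s.re := by
    intro s
    obtain ⟨N, hN⟩ := (hβtop.eventually_gt_atTop (-s.re)).exists
    have : β N ≤ β (N + 1) := hβ.monotone (Nat.le_succ N)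
    exact ⟨N, by linarith⟩
  choose φ hφ using hex
  have key : ∀ (N : ℕ) (s : ℂ), -β (N + 1) < s.re →
      mellinAuxP e a β (φ s) s = mellinAuxP e a β N s := by
    intro N s hN
    have h1 := mellinAuxP_agree e he hinf a β hβ hexp (le_max_left (φ s) N) (hφ s)
    have h2 := mellinAuxP_agree e he hinf a β hβ hexp (le_max_right (φ s) N) hN
    exact h1.trans h2.symm
  have hUopen : ∀ c : ℝ, IsOpen {z : ℂ | c < z.re} :=
    fun c => isOpen_Ioi.preimage Complex.continuous_re
  refine ⟨fun s => mellinAuxP e a β (φ s) s, ?_, ?_, ?_⟩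
  · -- agrees with the Mellin integral for re s > -β 0
    intro s hs
    have hβ01 : β 0 < β 1 := hβ Nat.zero_lt_one
    have h0 : -β (0 + 1) < s.re := by simpa using by linarith
    show mellinAuxP e a β (φ s) s = _
    rw [key 0 s h0, mellinAuxP_eq_mellin e he hinf a β hβ hexp hs]
    simp only [mellin, smul_eq_mul]
  · -- differentiability away from poles
    intro s hsne
    have hPdiff : DifferentiableAt ℂ (mellinAuxP e a β (φ s)) s := by
      apply DifferentiableAt.add
      · exact mellinAuxG_diff e he hinf a β (φ s) (hexp (φ s)) (hφ s)
      · apply DifferentiableAt.fun_sum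
        intro j _
        have hne : s + (β j : ℂ) ≠ 0 := fun h => hsne j (eq_neg_of_add_eq_zero_left h)
        exact (differentiableAt_const _).div
          (differentiableAt_id.add (differentiableAt_const _)) hne
    have heq : (fun z => mellinAuxP e a β (φ z) z) =ᶠ[nhds s] mellinAuxP e a β (φ s) :=
      eventuallyEq_of_mem ((hUopen (-β (φ s + 1))).mem_nhds (hφ s))
        (fun z hz => key (φ s) z hz)
    exact hPdiff.congr_of_eventuallyEq heq
  · -- residues
    intro j
    have hlt : β j < β (j + 1) := hβ (lt_add_one j)
    have hmem : (-(β j : ℂ)) ∈ {z : ℂ | -β (j + 1) < z.re} := by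
      simp only [Set.mem_setOf_eq, Complex.neg_re, Complex.ofReal_re]
      linarith
    have heq : (fun z => mellinAuxP e a β (φ z) z) =ᶠ[nhds (-(β j : ℂ))] mellinAuxP e a β j :=
      eventuallyEq_of_mem ((hUopen (-β (j + 1))).mem_nhds hmem) (fun z hz => key j z hz)
    set T : ℂ → ℂ := fun s => (s + (β j : ℂ)) *
      (mellin (mellinAuxG e a β j) s + ∑ i ∈ Finset.range j, a i / (s + (β i : ℂ))) + a j
      with hT_def
    have hT : Tendsto T (nhds (-(β j : ℂ))) (nhds (a j)) := by
      have c2 : ContinuousAt (mellin (mellinAuxG e a β j)) (-(β j : ℂ)) := by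
        refine (mellinAuxG_diff e he hinf a β j (hexp j) ?_).continuousAt
        simpa using by linarith
      have c3 : ContinuousAt (fun s : ℂ => ∑ i ∈ Finset.range j, a i / (s + (β i : ℂ)))
          (-(β j : ℂ)) := by
        refine (DifferentiableAt.fun_sum (𝕜 := ℂ) fun i hi => ?_).continuousAt
        have hij : i < j := Finset.mem_range.mp hi
        have hne : (-(β j : ℂ)) + (β i : ℂ) ≠ 0 := by
          have : β i < β j := hβ hij
          rw [show (-(β j : ℂ)) + (β i : ℂ) = ((β i - β j : ℝ) : ℂ) by push_cast; ring]
          rw [Complex.ofReal_ne_zero]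
          exact sub_ne_zero_of_ne (ne_of_lt this)
        exact (differentiableAt_const _).div
          (differentiableAt_id.add (differentiableAt_const _)) hne
      have c1 : ContinuousAt (fun s : ℂ => s + (β j : ℂ)) (-(β j : ℂ)) :=
        (continuous_id.add continuous_const).continuousAt
      have := ((c1.mul (c2.add c3)).add (continuousAt_const (y := a j))).tendsto
      simpa [hT_def, Pi.add_def, Pi.mul_def] using this
    have heq2 : (fun s : ℂ => (s + (β j : ℂ)) * mellinAuxP e a β (φ s) s)
        =ᶠ[nhdsWithin (-(β j : ℂ)) {(-(β j : ℂ))}ᶜ] T := by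
      filter_upwards [heq.filter_mono nhdsWithin_le_nhds, self_mem_nhdsWithin] with z hz1 hz2
      have hzne : z ≠ -(β j : ℂ) := hz2
      have hne : z + (β j : ℂ) ≠ 0 := fun h => hzne (eq_neg_of_add_eq_zero_left h)
      rw [hz1, mellinAuxP, Finset.sum_range_succ, hT_def]
      have hcanc : (z + (β j : ℂ)) * (a j / (z + (β j : ℂ))) = a j := by
        rw [mul_comm, div_mul_cancel₀ _ hne]
      calc (z + (β j : ℂ)) * (mellin (mellinAuxG e a β j) z +
              (∑ i ∈ Finset.range j, a i / (z + (β i : ℂ)) + a j / (z + (β j : ℂ))))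
          = (z + (β j : ℂ)) * (mellin (mellinAuxG e a β j) z +
              ∑ i ∈ Finset.range j, a i / (z + (β i : ℂ)))
            + (z + (β j : ℂ)) * (a j / (z + (β j : ℂ))) := by ring
        _ = _ := by rw [hcanc]
    exact Filter.Tendsto.congr' heq2.symm (hT.mono_left nhdsWithin_le_nhds)
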